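/- The function d ↦ f(1, √(d(1−d)), d) / d, i.e. d ↦ ( 4 / log( 4/(d(1−d)) + 1 ) + d ) / d, tends to +∞ as d → 0⁺ (limit over d ∈ (0,1) approaching 0 from the right). -/

import Mathlib

open Real Filter Set

theorem effective_consumption_bernoulli_tendsto_atTop :
    Filter.Tendsto (fun d : ℝ => (4 / Real.log (4 / (d * (1 - d)) + 1) + d) / d)
      (nhdsWithin 0 (Set.Ioo 0 1)) Filter.atTop := by
  set L : ℝ → ℝ := fun d => Real.log (4 / (d * (1 - d)) + 1) with hL
  have hmem : ∀ d ∈ Ioo (0:ℝ) 1, 0 < d ∧ 0 < L d := by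
    intro d hd
    have hd0 : 0 < d := hd.1
    have hd1 : 0 < 1 - d := by linarith [hd.2]
    have hprod : 0 < d * (1 - d) := mul_pos hd0 hd1
    have harg : 1 < 4 / (d * (1 - d)) + 1 := by
      have : 0 < 4 / (d * (1 - d)) := by positivity
      linarith
    exact ⟨hd0, Real.log_pos harg⟩
  -- d * L d → 0 within Ioo 0 1
  have hsq : Tendsto (fun d => d * L d) (nhdsWithin 0 (Ioo 0 1)) (nhds 0) := by
    have hub : Tendsto (fun d : ℝ => d * Real.log 9 - d * Real.log d)
        (nhdsWithin 0 (Ioo 0 1)) (nhds 0) := by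
      have h1 : Tendsto (fun d : ℝ => d * Real.log 9) (nhds (0:ℝ)) (nhds 0) := by
        simpa using (continuous_id.mul_const (Real.log 9)).tendsto (0:ℝ)
      have h2 : Tendsto (fun d : ℝ => d * Real.log d) (nhds (0:ℝ)) (nhds 0) := by
        simpa using Real.continuous_mul_log.tendsto 0
      have := (h1.sub h2)
      simpa using this.mono_left nhdsWithin_le_nhds
    apply squeeze_zero' ?_ ?_ hub
    · filter_upwards [self_mem_nhdsWithin] with d hd
      exact le_of_lt (mul_pos (hmem d hd).1 (hmem d hd).2)
    · filter_upwards [self_mem_nhdsWithin,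
        eventually_nhdsWithin_of_eventually_nhds
          (eventually_lt_nhds (by norm_num : (0:ℝ) < 1/2))] with d hd hd2
      have hd0 : 0 < d := hd.1
      have hd1 : (0:ℝ) < 1 - d := by linarith [hd.2]
      have hbound : 4 / (d * (1 - d)) + 1 ≤ 9 / d := by
        rw [div_add' _ _ _ (by positivity), div_le_div_iff₀ (by positivity) hd0]
        ring_nf
        nlinarith
      have hLle : L d ≤ Real.log (9 / d) := Real.log_le_log (by positivity) hbound
      have : Real.log (9 / d) = Real.log 9 - Real.log d := Real.log_div (by norm_num) hd0.ne'
      calc d * L d ≤ d * Real.log (9 / d) := by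
              exact mul_le_mul_of_nonneg_left hLle hd0.le
        _ = d * Real.log 9 - d * Real.log d := by rw [this]; ring
  have hpos : ∀ᶠ d in nhdsWithin (0:ℝ) (Ioo 0 1), 0 < d * L d := by
    filter_upwards [self_mem_nhdsWithin] with d hd
    exact mul_pos (hmem d hd).1 (hmem d hd).2
  have hto : Tendsto (fun d => d * L d) (nhdsWithin 0 (Ioo 0 1)) (nhdsWithin 0 (Ioi 0)) :=
    tendsto_nhdsWithin_iff.2 ⟨hsq, hpos⟩
  have hinv : Tendsto (fun d => (d * L d)⁻¹) (nhdsWithin 0 (Ioo 0 1)) atTop :=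
    hto.inv_tendsto_nhdsGT_zero
  have hmul : Tendsto (fun d => 4 * (d * L d)⁻¹ + 1) (nhdsWithin 0 (Ioo 0 1)) atTop :=
    tendsto_atTop_add_const_right _ 1 (hinv.const_mul_atTop (by norm_num))
  apply hmul.congr'
  filter_upwards [self_mem_nhdsWithin] with d hd
  obtain ⟨hd0, hLd⟩ := hmem d hd
  have key : ∀ x l : ℝ, 0 < x → 0 < l → (4 / l + x) / x = 4 * (x * l)⁻¹ + 1 := by
    intro x l hx hl
    field_simp
  exact (key d (L d) hd0 hLd).symm
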